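/- Let A be a C*-algebra, a ∈ A a positive element, and p ∈ A a projection with p ≾ a (Cuntz subequivalent). Then there exist α ∈ (0,∞), a projection q ∈ A, and δ > 0 such that q is Murray–von Neumann equivalent to p, q ≤ αa, and g(a)q = q, where g : [0,∞) → [0,1] is the piecewise-linear function vanishing on [0,δ], equal to 1 on [2δ,∞), and linear on [δ,2δ]. -/

import Mathlib

open scoped Topology

section Aux
variable {A : Type*} [CStarAlgebra A]

lemma commute_cfc_aux (b y : A) (hb : IsSelfAdjoint b)
    (h : Commute b y) (f : ℝ → ℝ) : Commute (cfc f b) y := by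
  refine cfc_cases (fun x => Commute x y) b f (Commute.zero_left y) fun hf hb' => ?_
  induction (⟨_, hf.restrict⟩ : C(spectrum ℝ b, ℝ)) using
      ContinuousMap.induction_on_of_compact with
  | const r =>
    have : (ContinuousMap.const (spectrum ℝ b) r) = algebraMap ℝ C(spectrum ℝ b, ℝ) r := rfl
    rw [this, AlgHomClass.commutes]
    exact Commute.symm (Algebra.commute_algebraMap_left r y).symm
  | id => simpa [cfcHom_id hb'] using h
  | star_id => rw [map_star, cfcHom_id hb', hb.star_eq]; exact h
  | add f g hf hg => simpa [map_add] using hf.add_left hg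
  | mul f g hf hg => simpa [map_mul] using hf.mul_left hg
  | frequently f hf =>
    have hcont : Continuous (fun g : C(spectrum ℝ b, ℝ) => cfcHom hb' g) :=
      (cfcHom_isClosedEmbedding hb').continuous
    have hclosed : IsClosed {g : C(spectrum ℝ b, ℝ) | Commute (cfcHom hb' g) y} :=
      isClosed_eq (hcont.mul continuous_const) (continuous_const.mul hcont)
    exact hclosed.mem_of_frequently_of_tendsto hf Filter.tendsto_id

lemma spec_ge_of_norm_lt [Nontrivial A] (e : A) (hn : ‖e‖ < 1/4) :
    ∀ t ∈ spectrum ℝ (1 + e), (3:ℝ)/4 ≤ t := by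
  intro t ht
  have h1 : t - 1 ∈ spectrum ℝ (1 + e - algebraMap ℝ A 1) := by
    rw [← spectrum.sub_singleton_eq]
    exact Set.sub_mem_sub ht rfl
  have h2 : (1 : A) + e - algebraMap ℝ A 1 = e := by simp
  rw [h2] at h1
  have := spectrum.norm_le_norm_of_mem h1
  rw [Real.norm_eq_abs, abs_le] at this
  linarith [this.1]

lemma cbc_eq_one (b : A) (hb : IsSelfAdjoint b) (hs : ∀ t ∈ spectrum ℝ b, (3:ℝ)/4 ≤ t) :
    cfc (fun t : ℝ => (Real.sqrt t)⁻¹) b * b * cfc (fun t : ℝ => (Real.sqrt t)⁻¹) b = 1 := by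
  have hcont : ContinuousOn (fun t : ℝ => (Real.sqrt t)⁻¹) (spectrum ℝ b) := by
    apply ContinuousOn.inv₀ (Real.continuous_sqrt.continuousOn)
    intro t ht
    have := hs t ht
    positivity
  nth_rewrite 2 [← cfc_id' ℝ b hb]
  rw [← cfc_mul _ _ b hcont (by fun_prop),
    ← cfc_mul (fun x : ℝ => (Real.sqrt x)⁻¹ * x) _ b (hcont.mul (continuousOn_id' _)) hcont,
    ← cfc_one (R := ℝ) b hb]
  apply cfc_congr
  intro t ht
  have h34 := hs t ht
  have hpos : 0 < t := by linarith
  have hne : Real.sqrt t ≠ 0 := by positivity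
  show (Real.sqrt t)⁻¹ * t * (Real.sqrt t)⁻¹ = 1
  field_simp
  rw [Real.sq_sqrt hpos.le]

end Aux

/-- Lemma 2.5, after Lemma 2.19 of [ArPrTm]: Let `A` be a (unital)
C*-algebra, `a ∈ A` positive, and `p ∈ A` a projection with `p ≾ a` (Cuntz
subequivalence: some sequence `vₖ a vₖ* → p`). Then there exist `α > 0`, a projection
`q ∈ A` Murray–von Neumann equivalent to `p`, and `δ > 0` such that `q ≤ α a` and
`g(a) q = q`, where `g` vanishes on `[0,δ]`, is 1 on `[2δ,∞)`, and is linear in between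
(so `g(t) = min 1 (max ((t-δ)/δ) 0)` for `t ≥ 0`). -/
theorem cuntz_below_gives_dominated_projection
    {A : Type*} [CStarAlgebra A] [PartialOrder A] [StarOrderedRing A]
    (a : A) (ha : 0 ≤ a) (p : A) (hp : p * p = p ∧ star p = p)
    (hcuntz : ∃ v : ℕ → A,
      Filter.Tendsto (fun k => v k * a * star (v k)) Filter.atTop (nhds p)) :
    ∃ (α : ℝ), 0 < α ∧ ∃ (q : A) (δ : ℝ), 0 < δ ∧
      (q * q = q ∧ star q = q) ∧
      (∃ v : A, v * star v = p ∧ star v * v = q) ∧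
      q ≤ α • a ∧
      cfc (fun t : ℝ => min 1 (max ((t - δ) / δ) 0)) a * q = q := by
  rcases subsingleton_or_nontrivial A with hA | hA
  · exact ⟨1, one_pos, p, 1, one_pos, ⟨hp.1, hp.2⟩, ⟨p, Subsingleton.elim _ _, Subsingleton.elim _ _⟩,
      le_of_eq (Subsingleton.elim _ _), Subsingleton.elim _ _⟩
  -- pick u close enough
  obtain ⟨v, hv⟩ := hcuntz
  rw [Metric.tendsto_atTop] at hv
  obtain ⟨N, hN⟩ := hv (1/8) (by norm_num)
  set u := v N with hu_def
  have hu : ‖u * a * star u - p‖ < 1/8 := by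
    have := hN N le_rfl
    rwa [dist_eq_norm] at this
  have hsa : IsSelfAdjoint a := ha.isSelfAdjoint
  have hspec : ∀ t ∈ spectrum ℝ a, 0 ≤ t :=
    (StarOrderedRing.nonneg_iff_spectrum_nonneg a hsa).mp ha
  set δ₀ : ℝ := (1/8) / (‖u‖^2 + 1) with hδ₀_def
  have hδ₀ : 0 < δ₀ := by positivity
  set f : ℝ → ℝ := fun t => max (t - δ₀) 0 with hf_def
  have hf_cont : Continuous f := by fun_prop
  set fa : A := cfc f a with hfa_def
  have hfa_sa : IsSelfAdjoint fa := cfc_predicate f a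
  set r : A := cfc (fun t : ℝ => Real.sqrt (f t)) a with hr_def
  have hr_sa : IsSelfAdjoint r := cfc_predicate _ a
  have hrr : r * r = fa := by
    rw [hr_def, ← cfc_mul _ _ a (by fun_prop) (by fun_prop), hfa_def]
    exact cfc_congr fun t _ => Real.mul_self_sqrt (le_max_right _ 0)
  have hnorm_afa : ‖a - fa‖ ≤ δ₀ := by
    have h1 : a - fa = cfc (fun t : ℝ => t - f t) a := by
      rw [cfc_sub (fun t : ℝ => t) f a (by fun_prop) (by fun_prop)]
      simp [cfc_id' ℝ a hsa, hfa_def]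
    rw [h1]
    refine norm_cfc_le hδ₀.le fun t ht => ?_
    have h0 := hspec t ht
    rw [Real.norm_eq_abs, abs_le, hf_def]
    constructor <;> cases' le_total (t - δ₀) 0 with h h <;>
      simp [max_eq_left, max_eq_right, h] <;> nlinarith
  set x : A := u * fa * star u with hx_def
  have hx_sa : star x = x := by
    simp only [hx_def, star_mul, star_star, hfa_sa.star_eq, mul_assoc]
  have hxp : ‖x - p‖ < 1/4 := by
    have h1 : x - u * a * star u = u * (fa - a) * star u := by
      rw [hx_def]; noncomm_ring
    have h2 : ‖x - u * a * star u‖ ≤ ‖u‖ * δ₀ * ‖u‖ := by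
      rw [h1]
      calc ‖u * (fa - a) * star u‖ ≤ ‖u * (fa - a)‖ * ‖star u‖ := norm_mul_le _ _
        _ ≤ ‖u‖ * ‖fa - a‖ * ‖star u‖ := by
            gcongr; exact norm_mul_le _ _
        _ ≤ ‖u‖ * δ₀ * ‖u‖ := by
            rw [norm_star]; gcongr; rwa [← norm_neg, neg_sub]
    have h3 : ‖u‖ * δ₀ * ‖u‖ < 1/8 := by
      rw [hδ₀_def]
      rw [div_eq_mul_inv]
      have h4 : (0:ℝ) < ‖u‖^2 + 1 := by positivity
      rw [show ‖u‖ * (1/8 * (‖u‖^2+1)⁻¹) * ‖u‖ = ‖u‖^2 / (‖u‖^2+1) * (1/8) by ring]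
      have : ‖u‖^2 / (‖u‖^2+1) < 1 := by
        rw [div_lt_one h4]; linarith
      nlinarith [sq_nonneg ‖u‖]
    calc ‖x - p‖ ≤ ‖x - u * a * star u‖ + ‖u * a * star u - p‖ := by
          simpa using norm_sub_le_norm_sub_add_norm_sub x (u * a * star u) p
      _ < 1/8 + 1/8 := by exact add_lt_add_of_le_of_lt (h2.trans h3.le) hu
      _ = 1/4 := by norm_num
  have hpnorm : ‖p‖ ≤ 1 := by
    have h1 : ‖p‖ * ‖p‖ = ‖p‖ := by
      rw [← CStarRing.norm_star_mul_self (x := p), hp.2, hp.1]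
    nlinarith [norm_nonneg p]
  set e : A := p * x * p - p with he_def
  have he_eq : e = p * (x - p) * p := by rw [he_def]; noncomm_ring [hp.1]
  have he_lt : ‖e‖ < 1/4 := by
    rw [he_eq]
    calc ‖p * (x - p) * p‖ ≤ ‖p * (x - p)‖ * ‖p‖ := norm_mul_le _ _
      _ ≤ ‖p‖ * ‖x - p‖ * ‖p‖ := by gcongr; exact norm_mul_le _ _
      _ ≤ ‖x - p‖ := by
          nlinarith [mul_le_mul_of_nonneg_right (mul_le_mul_of_nonneg_right hpnorm
            (norm_nonneg (x - p))) (norm_nonneg p),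
            mul_le_mul_of_nonneg_left hpnorm (norm_nonneg (x - p)), norm_nonneg (x - p)]
      _ < 1/4 := hxp
  set b : A := 1 + e with hb_def
  have hb_sa : IsSelfAdjoint b := by
    rw [hb_def, he_def]
    apply IsSelfAdjoint.add (show IsSelfAdjoint (1:A) by rw [IsSelfAdjoint, star_one])
    apply IsSelfAdjoint.sub _ (show IsSelfAdjoint p from hp.2)
    rw [IsSelfAdjoint]
    simp only [star_mul, star_star, hx_sa, hp.2, mul_assoc]
  have hbspec : ∀ t ∈ spectrum ℝ b, (3:ℝ)/4 ≤ t := spec_ge_of_norm_lt e he_lt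
  set c : A := cfc (fun t : ℝ => (Real.sqrt t)⁻¹) b with hc_def
  have hc_sa : IsSelfAdjoint c := cfc_predicate _ b
  have hcbc : c * b * c = 1 := cbc_eq_one b hb_sa hbspec
  have hL : ∀ y : A, p * (p * y) = p * y := fun y => by rw [← mul_assoc, hp.1]
  have hbp : b * p = p * x * p := by
    rw [hb_def, he_def]
    simp only [add_mul, sub_mul, one_mul, mul_assoc, hp.1]
    abel
  have hpb : p * b = p * x * p := by
    rw [hb_def, he_def]
    simp only [mul_add, mul_sub, mul_one, mul_assoc, hL, hp.1]
    abel
  have hcomm_bp : Commute b p := by rw [Commute, SemiconjBy, hbp, hpb]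
  have hcp : Commute c p := commute_cfc_aux b p hb_sa hcomm_bp _
  have hcpxpc : c * (p * x * p) * c = p := by
    have h2 : c * (p * x * p) * c = c * b * (p * c) := by rw [← hbp]; noncomm_ring
    rw [h2, ← hcp.eq, ← mul_assoc (c * b) c p, hcbc, one_mul]
  set w : A := c * p * u * r with hw_def
  have hstar_w : star w = r * (star u * (p * c)) := by
    rw [hw_def]; simp only [star_mul, star_star, hr_sa.star_eq, hc_sa.star_eq, hp.2, mul_assoc]
  have hww : w * star w = p := by
    rw [hw_def, hstar_w]
    have h1 : c * p * u * r * (r * (star u * (p * c)))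
        = c * (p * (u * (r * r * (star u * (p * c))))) := by noncomm_ring
    rw [h1, hrr]
    have h2 : c * (p * (u * (fa * (star u * (p * c))))) = c * (p * x * p) * c := by
      rw [hx_def]; noncomm_ring
    rw [h2, hcpxpc]
  set q : A := star w * w with hq_def
  have hq_sa : star q = q := by rw [hq_def]; simp [star_mul, star_star, mul_assoc]
  have hpw : p * w = w := by
    rw [hw_def]
    have h1 : p * (c * p * u * r) = p * c * (p * (u * r)) := by noncomm_ring
    rw [h1, ← hcp.eq]
    have h2 : c * p * (p * (u * r)) = c * (p * (p * (u * r))) := by noncomm_ring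
    rw [h2, hL]
    noncomm_ring
  have hqq : q * q = q := by
    rw [hq_def]
    have h1 : star w * w * (star w * w) = star w * (w * star w * w) := by noncomm_ring
    rw [h1, hww, hpw]
  set z : A := star (c * p * u) * (c * p * u) with hz_def
  have hz0 : (0:A) ≤ z := star_mul_self_nonneg _
  have hz_sa : IsSelfAdjoint z := IsSelfAdjoint.of_nonneg hz0
  have hq_rzr : q = r * z * r := by
    rw [hq_def, hw_def, hz_def]
    simp only [star_mul, star_star, hr_sa.star_eq, hc_sa.star_eq, hp.2, mul_assoc]
  have hzle : z ≤ algebraMap ℝ A ‖z‖ := IsSelfAdjoint.le_algebraMap_norm_self hz_sa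
  have hq_le_fa : q ≤ ‖z‖ • fa := by
    have h1 := star_left_conjugate_le_conjugate hzle r
    rw [hr_sa.star_eq] at h1
    rw [hq_rzr]
    calc r * z * r ≤ r * algebraMap ℝ A ‖z‖ * r := h1
      _ = ‖z‖ • fa := by
          rw [Algebra.algebraMap_eq_smul_one, mul_smul_comm, smul_mul_assoc, mul_one, hrr]
  have hafa : (0:A) ≤ a - fa := by
    have h1 : a - fa = cfc (fun t : ℝ => t - f t) a := by
      rw [cfc_sub (fun t : ℝ => t) f a (by fun_prop) (by fun_prop)]
      simp [cfc_id' ℝ a hsa, hfa_def]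
    rw [h1]
    apply cfc_nonneg
    intro t ht
    have h0 := hspec t ht
    rw [hf_def]
    simp only
    rcases le_total (t - δ₀) 0 with h | h
    · rw [max_eq_right h]; linarith
    · rw [max_eq_left h]; linarith
  have hsmul : (0:A) ≤ ‖z‖ • (a - fa) := smul_nonneg (norm_nonneg z) hafa
  have hαa : ‖z‖ • fa ≤ (‖z‖ + 1) • a := by
    rw [← sub_nonneg]
    have h2 : (‖z‖ + 1) • a - ‖z‖ • fa = ‖z‖ • (a - fa) + a := by module
    rw [h2]
    exact add_nonneg hsmul ha
  have hg_cont : Continuous (fun t : ℝ => min 1 (max ((t - δ₀/2) / (δ₀/2)) 0)) := by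
    exact continuous_const.min ((((continuous_id.sub continuous_const).div_const
      (δ₀/2)).max continuous_const))
  have hgr : cfc (fun t : ℝ => min 1 (max ((t - δ₀/2) / (δ₀/2)) 0)) a * r = r := by
    rw [hr_def, ← cfc_mul _ _ a hg_cont.continuousOn (by fun_prop)]
    apply cfc_congr
    intro t ht
    have h0 := hspec t ht
    by_cases hle : t ≤ δ₀
    · have hft : f t = 0 := by rw [hf_def]; exact max_eq_right (by linarith)
      simp [hft]
    · push_neg at hle
      have hg1 : min 1 (max ((t - δ₀/2)/(δ₀/2)) 0) = 1 := by
        have h1 : (1:ℝ) ≤ (t - δ₀/2)/(δ₀/2) := by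
          rw [le_div_iff₀ (by positivity)]; linarith
        exact min_eq_left (le_trans h1 (le_max_left _ _))
      simp only [hg1, one_mul]
  refine ⟨‖z‖ + 1, by positivity, q, δ₀ / 2, by positivity, ⟨hqq, hq_sa⟩,
    ⟨w, hww, hq_def.symm⟩, hq_le_fa.trans hαa, ?_⟩
  rw [hq_rzr,
    show cfc (fun t : ℝ => min 1 (max ((t - δ₀/2) / (δ₀/2)) 0)) a * (r * z * r)
      = cfc (fun t : ℝ => min 1 (max ((t - δ₀/2) / (δ₀/2)) 0)) a * r * (z * r) from by
        noncomm_ring,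
    hgr]
  noncomm_ring
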